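/- With X a nontrivial minimal subshift of Σ₂ and X̃ ⊆ Σ₃ its extension as above, for every nonempty open set U ⊆ X̃ there exist a nonempty compact set K ⊆ U and an integer m ≥ 1 with σ^m(K) = K. Consequently the induced map σ̄ on the hyperspace K(X̃) has a dense set of periodic points. -/

import Mathlib

open TopologicalSpace

/-- The induced map on the hyperspace of nonempty compact subsets. -/
def barMap {X : Type*} [TopologicalSpace X] (f : X → X) (hf : Continuous f) :
    NonemptyCompacts X → NonemptyCompacts X :=
  fun A => ⟨⟨f '' A, A.isCompact.image hf⟩, A.nonempty.image f⟩

/-- Topological transitivity. -/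
def IsTransitive {X : Type*} [TopologicalSpace X] (f : X → X) : Prop :=
  ∀ U V : Set X, IsOpen U → IsOpen V → U.Nonempty → V.Nonempty →
    ∃ n : ℕ, (f^[n] '' U ∩ V).Nonempty

/-- Topological mixing. -/
def IsMixing {X : Type*} [TopologicalSpace X] (f : X → X) : Prop :=
  ∀ U V : Set X, IsOpen U → IsOpen V → U.Nonempty → V.Nonempty →
    ∃ N : ℕ, ∀ n ≥ N, (f^[n] '' U ∩ V).Nonempty

/-- Weak mixing: `f × f` is transitive. -/
def IsWeaklyMixing {X : Type*} [TopologicalSpace X] (f : X → X) : Prop :=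
  IsTransitive (fun p : X × X => (f p.1, f p.2))

/-- The set of periodic points. -/
def Periodics {X : Type*} (f : X → X) : Set X := {x | ∃ n ≥ 1, f^[n] x = x}

/-- The shift map on the full shift over k symbols. -/
def shiftMap {k : ℕ} : (ℕ → Fin k) → (ℕ → Fin k) := fun x n => x (n + 1)

/-- A finite word is admissible in Y if it occurs in some element of Y. -/
def AdmissibleIn {k : ℕ} (Y : Set (ℕ → Fin k)) (u : List (Fin k)) : Prop :=
  ∃ y ∈ Y, ∃ i : ℕ, ∀ l : ℕ, ∀ h : l < u.length, y (i + l) = u.get ⟨l, h⟩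

/-- A nonempty closed invariant set with no proper nonempty closed invariant subset. -/
def IsMinimalSet {X : Type*} [TopologicalSpace X] (f : X → X) (A : Set X) : Prop :=
  A.Nonempty ∧ IsClosed A ∧ Set.MapsTo f A A ∧
    ∀ B ⊆ A, B.Nonempty → IsClosed B → Set.MapsTo f B B → B = A

/-- Topological mixing of the subsystem on an invariant subset Y, phrased with
relatively open sets. -/
def SubMixing {X : Type*} [TopologicalSpace X] (f : X → X) (Y : Set X) : Prop :=
  ∀ U V : Set X, IsOpen U → IsOpen V → (U ∩ Y).Nonempty → (V ∩ Y).Nonempty →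
    ∃ N : ℕ, ∀ n ≥ N, ∃ y ∈ U ∩ Y, f^[n] y ∈ V

/-- The embedding of the 2-symbol alphabet into the 3-symbol alphabet. -/
def emb23 : Fin 2 → Fin 3 := fun b => ⟨b.val, by omega⟩

/-- The extension of b in Σ₃: sequences obtained from b by inserting the symbol 2
at the remaining positions, keeping the symbols of b in order along an infinite
increasing sequence of positions. -/
def Xb (b : ℕ → Fin 2) : Set (ℕ → Fin 3) :=
  {x | ∃ n : ℕ → ℕ, StrictMono n ∧ (∀ i, x (n i) = emb23 (b i)) ∧
        ∀ m, (∀ i, n i ≠ m) → x m = (2 : Fin 3)}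

/-- The extension of the subshift X ⊆ Σ₂ inside Σ₃. -/
def Xtilde (X : Set (ℕ → Fin 2)) : Set (ℕ → Fin 3) :=
  closure (⋃ b ∈ X, Xb b)


instance : UniformSpace (Fin 3) := ⊥

noncomputable instance : MetricSpace (ℕ → Fin 3) :=
  PiNat.metricSpaceOfDiscreteUniformity (fun _ => rfl)

section Aux
open Set

lemma continuous_shiftMap {k : ℕ} : Continuous (shiftMap (k := k)) :=
  continuous_pi fun n => continuous_apply (n + 1)

lemma shiftMap_iterate {k : ℕ} (x : ℕ → Fin k) (t r : ℕ) :
    shiftMap^[t] x r = x (r + t) := by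
  induction t generalizing x with
  | zero => rfl
  | succ t ih =>
    rw [Function.iterate_succ_apply, ih]
    simp [shiftMap, Nat.add_assoc]

lemma iter_mem {k : ℕ} {X : Set (ℕ → Fin k)} (hXi : Set.MapsTo shiftMap X X) :
    ∀ t, Set.MapsTo (shiftMap^[t]) X X := fun t => hXi.iterate t

lemma cyl_subset {U : Set (ℕ → Fin 3)} (hU : IsOpen U) {z : ℕ → Fin 3} (hz : z ∈ U) :
    ∃ N, ∀ x : ℕ → Fin 3, (∀ l < N, x l = z l) → x ∈ U := by
  obtain ⟨v, ⟨x₀, n₀, rfl⟩, hzv, hvU⟩ :=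
    (PiNat.isTopologicalBasis_cylinders (fun _ : ℕ => Fin 3)).exists_subset_of_mem_open hz hU
  refine ⟨n₀, fun x hx => hvU ?_⟩
  rw [← PiNat.mem_cylinder_iff_eq.1 hzv]
  exact PiNat.mem_cylinder_iff.2 hx

lemma exists_return {X : Set (ℕ → Fin 2)} (hXc : IsClosed X)
    (hXi : Set.MapsTo shiftMap X X)
    (hXmin : IsMinimalSet shiftMap X) {V : Set (ℕ → Fin 2)} (hV : IsOpen V)
    (hVX : (V ∩ X).Nonempty) :
    ∃ L, ∀ x ∈ X, ∃ t ≤ L, shiftMap^[t] x ∈ V := by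
  obtain ⟨b, hbV, hbX⟩ := hVX
  have hcover : X ⊆ ⋃ t : ℕ, (shiftMap^[t]) ⁻¹' V := by
    intro x hx
    set C := closure (Set.range fun t => shiftMap^[t] x) with hC
    have hCX : C ⊆ X := closure_minimal (range_subset_iff.2 fun t => iter_mem hXi t hx) hXc
    have hCm : Set.MapsTo shiftMap C C := by
      intro c hc
      have h1 : shiftMap c ∈ shiftMap '' C := ⟨c, hc, rfl⟩
      have h2 : shiftMap '' C ⊆ closure (shiftMap '' Set.range fun t => shiftMap^[t] x) :=
        image_closure_subset_closure_image continuous_shiftMap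
      refine closure_mono ?_ (h2 h1)
      rw [← Set.range_comp]
      rintro - ⟨t, rfl⟩
      exact ⟨t + 1, Function.iterate_succ_apply' shiftMap t x⟩
    have hCeq : C = X := hXmin.2.2.2 C hCX ⟨x, subset_closure ⟨0, rfl⟩⟩ isClosed_closure hCm
    have hb : b ∈ C := hCeq ▸ hbX
    obtain ⟨y, hyV, t, rfl⟩ := mem_closure_iff.1 hb V hV hbV
    exact Set.mem_iUnion.2 ⟨t, hyV⟩
  have hXcomp : IsCompact X := hXc.isCompact
  obtain ⟨s, hs⟩ := hXcomp.elim_finite_subcover (fun t : ℕ => (shiftMap^[t]) ⁻¹' V)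
    (fun t => hV.preimage (continuous_shiftMap.iterate t)) hcover
  classical
  refine ⟨s.sup id, fun x hx => ?_⟩
  obtain ⟨t, hts, htV⟩ := Set.mem_iUnion₂.1 (hs hx)
  exact ⟨t, Finset.le_sup (f := id) hts, htV⟩

lemma shift_Xb {X : Set (ℕ → Fin 2)} (hXi : Set.MapsTo shiftMap X X)
    {b : ℕ → Fin 2} (hb : b ∈ X) {x : ℕ → Fin 3} (hx : x ∈ Xb b) :
    shiftMap x ∈ ⋃ b' ∈ X, Xb b' := by
  obtain ⟨n, hmono, hval, hoff⟩ := hx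
  by_cases h0 : n 0 = 0
  · refine Set.mem_biUnion (hXi hb) ?_
    refine ⟨fun i => n (i + 1) - 1, ?_, ?_, ?_⟩
    · intro i i' hii'
      have h1 : n (i + 1) < n (i' + 1) := hmono (by omega)
      have h2 : 0 < n (i + 1) := h0 ▸ hmono (Nat.succ_pos i)
      show n (i + 1) - 1 < n (i' + 1) - 1
      omega
    · intro i
      have h2 : 0 < n (i + 1) := h0 ▸ hmono (Nat.succ_pos i)
      show shiftMap x (n (i + 1) - 1) = emb23 (shiftMap b i)
      have h3 : n (i + 1) - 1 + 1 = n (i + 1) := by omega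
      simp only [shiftMap, h3, hval]
    · intro q hq
      have hq' : ∀ i, n (i + 1) - 1 ≠ q := hq
      refine hoff _ fun i => ?_
      cases i with
      | zero => omega
      | succ i =>
        intro hc
        exact hq' i (by omega)
  · refine Set.mem_biUnion hb ?_
    refine ⟨fun i => n i - 1, ?_, ?_, ?_⟩
    · intro i i' hii'
      have h1 : n i < n i' := hmono hii'
      have h2 : n 0 ≤ n i := hmono.monotone (Nat.zero_le i)
      show n i - 1 < n i' - 1
      omega
    · intro i
      have h2 : n 0 ≤ n i := hmono.monotone (Nat.zero_le i)
      show shiftMap x (n i - 1) = emb23 (b i)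
      have h3 : n i - 1 + 1 = n i := by omega
      simp only [shiftMap, h3, hval]
    · intro q hq
      have hq' : ∀ i, n i - 1 ≠ q := hq
      refine hoff _ fun i hc => ?_
      have h2 : n 0 ≤ n i := hmono.monotone (Nat.zero_le i)
      exact hq' i (by omega)

lemma Xtilde_inv {X : Set (ℕ → Fin 2)} (hXi : Set.MapsTo shiftMap X X) :
    Set.MapsTo shiftMap (Xtilde X) (Xtilde X) := by
  intro x hx
  have h1 : shiftMap x ∈ shiftMap '' closure (⋃ b ∈ X, Xb b) := ⟨x, hx, rfl⟩
  have h2 := image_closure_subset_closure_image (s := ⋃ b ∈ X, Xb b) continuous_shiftMap h1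
  refine closure_mono ?_ h2
  rintro - ⟨y, hy, rfl⟩
  obtain ⟨b, hb, hyb⟩ := Set.mem_iUnion₂.1 hy
  exact shift_Xb hXi hb hyb

lemma keyA (X : Set (ℕ → Fin 2)) (hXc : IsClosed X) (hXi : Set.MapsTo shiftMap X X)
    (hXmin : IsMinimalSet shiftMap X)
    (U : Set (ℕ → Fin 3)) (hU : IsOpen U) (hne : (U ∩ Xtilde X).Nonempty) :
    ∃ K : Set (ℕ → Fin 3), K.Nonempty ∧ IsCompact K ∧ K ⊆ U ∩ Xtilde X ∧
      ∃ m : ℕ, 1 ≤ m ∧ shiftMap^[m] '' K = K := by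
  classical
  -- find a point of the union inside U
  obtain ⟨u0, hu0U, hu0t⟩ := hne
  obtain ⟨z, hzD, hzU⟩ :=
    mem_closure_iff.1 hu0t U hU hu0U
  obtain ⟨b, hbX, n, hmono, hval, hoff⟩ := Set.mem_iUnion₂.1 hzU
  -- cylinder inside U
  obtain ⟨N, hNU⟩ := cyl_subset hU hzD
  set W : ℕ := max N (n 0 + 1) with hW
  have hWU : ∀ x : ℕ → Fin 3, (∀ l < W, x l = z l) → x ∈ U := by
    intro x hx
    exact hNU x fun l hl => hx l (lt_of_lt_of_le hl (le_max_left _ _))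
  have hn0W : n 0 < W := by omega
  -- the number of letters of b inside the window
  have hex : ∃ i, W ≤ n i := ⟨W, hmono.le_apply⟩
  set j : ℕ := Nat.find hex with hj
  have hjspec : W ≤ n j := Nat.find_spec hex
  have hjlt : ∀ i, i < j ↔ n i < W := by
    intro i
    constructor
    · intro hi
      have := Nat.find_min hex hi
      omega
    · intro hi
      by_contra hij
      have : n j ≤ n i := hmono.monotone (by omega)
      omega
  have hjpos : 1 ≤ j := by
    by_contra h
    have : ¬ (0 < j) := by omega
    rw [hjlt 0] at this
    omega
  -- syndetic return to the cylinder of b of length j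
  set V : Set (ℕ → Fin 2) := {x | ∀ r < j, x r = b r} with hVdef
  have hVopen : IsOpen V := by
    have : V = ⋂ r ∈ Finset.range j, (fun x : ℕ → Fin 2 => x r) ⁻¹' {b r} := by
      ext x
      simp [hVdef]
    rw [this]
    exact isOpen_biInter_finset fun r _ => (continuous_apply r).isOpen_preimage _ (isOpen_discrete _)
  obtain ⟨L, hL⟩ := exists_return hXc hXi hXmin hVopen ⟨b, fun r _ => rfl, hbX⟩
  set m : ℕ := W + L + 1 with hm
  have hmpos : 1 ≤ m := by omega
  have hWm : W < m := by omega
  -- choice of return times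
  have hbt : ∀ s : ℕ, shiftMap^[s] b ∈ X := fun s => iter_mem hXi s hbX
  have hfex : ∀ s : ℕ, ∃ t ≤ L, ∀ r < j, b (r + t + s) = b r := by
    intro s
    obtain ⟨t, htL, htV⟩ := hL _ (hbt s)
    refine ⟨t, htL, fun r hr => ?_⟩
    have := htV r hr
    rwa [shiftMap_iterate, shiftMap_iterate] at this
  choose f hfL hfV using hfex
  -- the block decomposition positions
  set P : ℕ → ℕ := fun k => Nat.rec 0 (fun k pk => pk + j + f (pk + j)) k with hP
  have hP0 : P 0 = 0 := rfl
  have hPsucc : ∀ k, P (k + 1) = P k + j + f (P k + j) := fun k => rfl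
  have hPocc : ∀ k, ∀ r < j, b (P k + r) = b r := by
    intro k
    induction k with
    | zero => intro r hr; rw [hP0, Nat.zero_add]
    | succ k ih =>
      intro r hr
      have h1 := hfV (P k + j) r hr
      rw [hPsucc]
      have : P k + j + f (P k + j) + r = r + f (P k + j) + (P k + j) := by ring
      rw [this, h1]
  have hPgapL : ∀ k, P (k + 1) ≤ P k + j + L := fun k => by
    have := hfL (P k + j); rw [hPsucc]; omega
  have hPgap1 : ∀ k, P k + j ≤ P (k + 1) := fun k => by rw [hPsucc]; omega
  have hPmono : ∀ k, P k < P (k + 1) := fun k => by have := hPgap1 k; omega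
  have hPge : ∀ k, k ≤ P k := by
    intro k
    induction k with
    | zero => omega
    | succ k ih => have := hPmono k; omega
  -- the block index of a letter position
  have hKex : ∀ i : ℕ, ∃ k, i < P (k + 1) := fun i => ⟨i, by have := hPge (i+1); omega⟩
  set Kb : ℕ → ℕ := fun i => Nat.find (hKex i) with hKb
  have hKlt : ∀ i, i < P (Kb i + 1) := fun i => Nat.find_spec (hKex i)
  have hPlt : ∀ a c, a < c → P a < P c := by
    intro a c hac
    induction c with
    | zero => omega
    | succ c ih =>
      rcases Nat.lt_or_ge a c with h | h
      · exact lt_trans (ih h) (hPmono c)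
      · have : a = c := by omega
        subst this; exact hPmono a
  have hKle : ∀ i, P (Kb i) ≤ i := by
    intro i
    by_contra hc
    push_neg at hc
    have h1 : 1 ≤ Kb i := by
      rcases Nat.eq_zero_or_pos (Kb i) with h | h
      · rw [h, hP0] at hc; omega
      · omega
    have h2 : i < P (Kb i - 1 + 1) := by
      have h3 : Kb i - 1 + 1 = Kb i := by omega
      rw [h3]; omega
    have h3 : Nat.find (hKex i) ≤ Kb i - 1 := Nat.find_min' (hKex i) h2
    have h4 : Kb i = Nat.find (hKex i) := rfl
    omega
  have hKuniq : ∀ i k, P k ≤ i → i < P (k + 1) → Kb i = k := by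
    intro i k h1 h2
    have ha : Nat.find (hKex i) ≤ k := Nat.find_min' (hKex i) h2
    have hb : Kb i = Nat.find (hKex i) := rfl
    by_contra hc
    have hlt : Kb i + 1 ≤ k := by omega
    have h3 : P (Kb i + 1) ≤ P k := by
      rcases Nat.eq_or_lt_of_le hlt with h | h
      · exact h ▸ le_rfl
      · exact (hPlt _ _ h).le
    have := hKlt i
    omega
  -- the constructed point
  set xs : ℕ → Fin 3 := fun q =>
    if q % m < W then z (q % m)
    else if q % m < W + (P (q / m + 1) - (P (q / m) + j)) then
      emb23 (b (P (q / m) + j + (q % m - W)))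
    else 2 with hxs
  -- position function within blocks
  set g : ℕ → ℕ → ℕ := fun k r => if r < j then m * k + n r else m * k + (W + (r - j)) with hg
  have hgbound : ∀ k r, r < P (k + 1) - P k → m * k ≤ g k r ∧ g k r < m * (k + 1) := by
    intro k r hr
    have hgap := hPgapL k
    have hgap1 := hPgap1 k
    by_cases h : r < j
    · have : n r < W := (hjlt r).1 h
      simp only [hg, if_pos h]
      constructor
      · omega
      · have : m * (k + 1) = m * k + m := by ring
        omega
    · simp only [hg, if_neg h]
      have h2 : r - j ≤ L - 1 ∨ (L = 0 ∧ r - j = 0) := by omega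
      have : m * (k + 1) = m * k + m := by ring
      omega
  have hgmono : ∀ k r r', r < r' → r' < P (k + 1) - P k → g k r < g k r' := by
    intro k r r' hrr hr'
    by_cases h : r < j <;> by_cases h' : r' < j
    · simp only [hg, if_pos h, if_pos h']
      have := hmono hrr; omega
    · simp only [hg, if_pos h, if_neg h']
      have : n r < W := (hjlt r).1 h
      omega
    · omega
    · simp only [hg, if_neg h, if_neg h']
      omega
  -- value of xs at block positions
  have hdm : ∀ k l, l < m → (m * k + l) / m = k ∧ (m * k + l) % m = l := by
    intro k l hl
    constructor
    · rw [Nat.mul_add_div (by omega)]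
      simp [Nat.div_eq_of_lt hl]
    · rw [Nat.mul_add_mod, Nat.mod_eq_of_lt hl]
  have hgval : ∀ k r, r < P (k + 1) - P k → xs (g k r) = emb23 (b (P k + r)) := by
    intro k r hr
    have hgap := hPgapL k
    have hgap1 := hPgap1 k
    by_cases h : r < j
    · have hnr : n r < W := (hjlt r).1 h
      have hq : g k r = m * k + n r := by simp only [hg, if_pos h]
      rw [hq]
      obtain ⟨hd, hm'⟩ := hdm k (n r) (by omega)
      simp only [hxs, hd, hm', if_pos hnr]
      rw [hval r, hPocc k r h]
    · have hq : g k r = m * k + (W + (r - j)) := by simp only [hg, if_neg h]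
      rw [hq]
      have hlm : W + (r - j) < m := by omega
      obtain ⟨hd, hm'⟩ := hdm k (W + (r - j)) hlm
      simp only [hxs, hd, hm']
      rw [if_neg (by omega), if_pos (by omega)]
      congr 2
      omega
  -- xs belongs to Xb b
  set ns : ℕ → ℕ := fun i => g (Kb i) (i - P (Kb i)) with hns
  have hnsmono : StrictMono ns := by
    apply strictMono_nat_of_lt_succ
    intro i
    set k := Kb i with hk
    have h1 : P k ≤ i := hKle i
    have h2 : i < P (k + 1) := hKlt i
    rcases Nat.lt_or_ge (i + 1) (P (k + 1)) with h | h
    · have hk1 : Kb (i + 1) = k := hKuniq (i + 1) k (by omega) h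
      simp only [hns, hk1, ← hk]
      exact hgmono k (i - P k) (i + 1 - P k) (by omega) (by omega)
    · have hieq : i + 1 = P (k + 1) := by omega
      have hk1 : Kb (i + 1) = k + 1 := by
        apply hKuniq
        · omega
        · have := hPmono (k + 1); omega
      have hub := (hgbound k (i - P k) (by omega)).2
      have e1 : ns (i + 1) = g (k + 1) 0 := by
        simp only [hns, hk1]
        congr 1
        omega
      have e2 : ns i = g k (i - P k) := by simp only [hns, ← hk]
      have e3 : g (k + 1) 0 = m * (k + 1) + n 0 := by
        simp only [hg]
        rw [if_pos (show (0:ℕ) < j by omega)]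
      rw [e1, e2, e3]
      omega
  have hnsval : ∀ i, xs (ns i) = emb23 (b i) := by
    intro i
    have h1 : P (Kb i) ≤ i := hKle i
    have h2 : i < P (Kb i + 1) := hKlt i
    have := hgval (Kb i) (i - P (Kb i)) (by omega)
    simp only [hns, this]
    congr 2
    omega
  have hnsoff : ∀ q, (∀ i, ns i ≠ q) → xs q = 2 := by
    intro q hq
    by_contra hc
    set k := q / m with hk
    set l := q % m with hl
    have hqe : q = m * k + l := by rw [hk, hl]; exact (Nat.div_add_mod q m).symm
    have hlm : l < m := Nat.mod_lt _ (by omega)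
    rcases Nat.lt_or_ge l W with h | h
    · -- xs q = z l ≠ 2, so l is one of the n positions
      have hxq : xs q = z l := by simp only [hxs, ← hk, ← hl, if_pos h]
      have hzl : z l ≠ 2 := by rw [← hxq]; exact hc
      have : ¬ (∀ i, n i ≠ l) := fun ha => hzl (hoff l ha)
      push_neg at this
      obtain ⟨i0, hi0⟩ := this
      have hi0j : i0 < j := (hjlt i0).2 (by rw [hi0]; exact h)
      have hgap1 := hPgap1 k
      refine hq (P k + i0) ?_
      have hKk : Kb (P k + i0) = k := hKuniq _ k (by omega) (by omega)
      simp only [hns, hKk]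
      have : P k + i0 - P k = i0 := by omega
      rw [this]
      simp only [hg]
      rw [if_pos hi0j, hi0]
      omega
    · rcases Nat.lt_or_ge l (W + (P (k + 1) - (P k + j))) with h' | h'
      · set r := j + (l - W) with hr
        have hgap1 := hPgap1 k
        have hrlt : r < P (k + 1) - P k := by omega
        refine hq (P k + r) ?_
        have hKk : Kb (P k + r) = k := hKuniq _ k (by omega) (by omega)
        simp only [hns, hKk]
        have h3 : P k + r - P k = r := by omega
        rw [h3]
        simp only [hg, if_neg (by omega : ¬ r < j)]
        omega
      · have : xs q = 2 := by
          simp only [hxs, ← hk, ← hl, if_neg (by omega : ¬ l < W), if_neg (by omega : ¬ l < W + (P (k+1) - (P k + j)))]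
        exact hc this
  have hxsXb : xs ∈ Xb b := ⟨ns, hnsmono, hnsval, hnsoff⟩
  have hxsXt : xs ∈ Xtilde X := subset_closure (Set.mem_biUnion hbX hxsXb)
  -- the target closed set
  set F : Set (ℕ → Fin 3) := Xtilde X ∩ {x | ∀ l < W, x l = z l} with hF
  have hFclosed : IsClosed F := by
    refine IsClosed.inter isClosed_closure ?_
    have : {x : ℕ → Fin 3 | ∀ l < W, x l = z l} =
        ⋂ l, ⋂ (_ : l < W), (fun x : ℕ → Fin 3 => x l) ⁻¹' {z l} := by
      ext x; simp
    rw [this]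
    exact isClosed_iInter fun l => isClosed_iInter fun _ =>
      IsClosed.preimage (continuous_apply l) isClosed_singleton
  have hFU : F ⊆ U ∩ Xtilde X := fun x hx => ⟨hWU x hx.2, hx.1⟩
  -- the iterated shift
  set T : (ℕ → Fin 3) → (ℕ → Fin 3) := shiftMap^[m] with hT
  have hTcont : Continuous T := continuous_shiftMap.iterate m
  have horbF : ∀ c : ℕ, T^[c] xs ∈ F := by
    intro c
    have hTc : T^[c] xs = shiftMap^[m * c] xs := by
      rw [hT, ← Function.iterate_mul]
    constructor
    · rw [hTc]; exact iter_mem (Xtilde_inv hXi) (m * c) hxsXt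
    · intro l hl
      rw [hTc, shiftMap_iterate]
      have h1 : l + m * c = m * c + l := by ring
      obtain ⟨hd, hmo⟩ := hdm c l (by omega)
      rw [h1]
      simp only [hxs, hd, hmo, if_pos hl]
  -- the omega-limit set
  set C : ℕ → Set (ℕ → Fin 3) := fun c => closure (Set.range fun i => T^[i + c] xs) with hC
  have hCanti : ∀ c, C (c + 1) ⊆ C c := by
    intro c
    apply closure_mono
    rintro - ⟨i, rfl⟩
    exact ⟨i + 1, by show T^[i + 1 + c] xs = T^[i + (c + 1)] xs; congr 1; omega⟩
  have hCne : ∀ c, (C c).Nonempty := fun c => ⟨T^[c] xs, subset_closure ⟨0, by show T^[0 + c] xs = T^[c] xs; rw [Nat.zero_add]⟩⟩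
  have hCclosed : ∀ c, IsClosed (C c) := fun c => isClosed_closure
  have hCcomp : ∀ c, IsCompact (C c) := fun c => (hCclosed c).isCompact
  have hCF : ∀ c, C c ⊆ F := fun c =>
    closure_minimal (Set.range_subset_iff.2 fun i => horbF (i + c)) hFclosed
  have hTC : ∀ c, T '' C c = C (c + 1) := by
    intro c
    have hfun : (T ∘ fun i => T^[i + c] xs) = fun i => T^[i + (c + 1)] xs := by
      funext i
      show T (T^[i + c] xs) = T^[i + (c + 1)] xs
      rw [← Function.iterate_succ_apply' T (i + c) xs]
      congr 1
      try omega
    have himg : T '' (Set.range fun i => T^[i + c] xs) = Set.range fun i => T^[i + (c + 1)] xs := by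
      rw [← Set.range_comp, hfun]
    apply Set.Subset.antisymm
    · intro y hy
      have h1 : y ∈ closure (T '' (Set.range fun i => T^[i + c] xs)) :=
        image_closure_subset_closure_image hTcont hy
      rwa [himg] at h1
    · have h2 : IsClosed (T '' C c) := ((hCcomp c).image hTcont).isClosed
      apply closure_minimal _ h2
      rw [← himg]
      exact Set.image_mono subset_closure
  refine ⟨⋂ c, C c, ?_, ?_, ?_, m, hmpos, ?_⟩
  · exact IsCompact.nonempty_iInter_of_sequence_nonempty_isCompact_isClosed C hCanti hCne
      (hCcomp 0) hCclosed
  · exact (isClosed_iInter hCclosed).isCompact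
  · exact (Set.iInter_subset C 0).trans ((hCF 0).trans hFU)
  · show T '' (⋂ c, C c) = ⋂ c, C c
    apply Set.Subset.antisymm
    · rintro - ⟨x, hx, rfl⟩
      refine Set.mem_iInter.2 fun c => ?_
      have h1 : T x ∈ T '' C c := ⟨x, Set.mem_iInter.1 hx c, rfl⟩
      rw [hTC c] at h1
      exact hCanti c h1
    · intro y hy
      set D : ℕ → Set (ℕ → Fin 3) := fun c => C c ∩ T ⁻¹' {y} with hD
      have hDne : ∀ c, (D c).Nonempty := by
        intro c
        have h1 : y ∈ C (c + 1) := Set.mem_iInter.1 hy (c + 1)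
        rw [← hTC c] at h1
        obtain ⟨x, hx, hxy⟩ := h1
        exact ⟨x, hx, hxy⟩
      have hDclosed : ∀ c, IsClosed (D c) :=
        fun c => (hCclosed c).inter (IsClosed.preimage hTcont isClosed_singleton)
      have hDanti : ∀ c, D (c + 1) ⊆ D c := fun c => Set.inter_subset_inter_left _ (hCanti c)
      obtain ⟨x, hx⟩ := IsCompact.nonempty_iInter_of_sequence_nonempty_isCompact_isClosed D
        hDanti hDne ((hDclosed 0).isCompact) hDclosed
      have hx1 : ∀ c, x ∈ C c := fun c => (Set.mem_iInter.1 hx c).1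
      have hx2 : T x = y := (Set.mem_iInter.1 hx 0).2
      exact ⟨x, Set.mem_iInter.2 hx1, hx2⟩

lemma iter_image {k : ℕ} {K : Set (ℕ → Fin k)} {mm : ℕ}
    (h : shiftMap^[mm] '' K = K) : ∀ c, shiftMap^[mm * c] '' K = K := by
  intro c
  induction c with
  | zero => simp
  | succ c ih =>
    have : mm * (c + 1) = mm * c + mm := by ring
    rw [this, Function.iterate_add, Set.image_comp, h, ih]

lemma barMap_iter {Y : Type*} [TopologicalSpace Y] (f : Y → Y) (hf : Continuous f)
    (M : ℕ) (A : NonemptyCompacts Y) :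
    (((barMap f hf)^[M]) A : Set Y) = f^[M] '' (A : Set Y) := by
  induction M with
  | zero => simp
  | succ M ih =>
    rw [Function.iterate_succ_apply']
    show f '' (((barMap f hf)^[M]) A : Set Y) = _
    rw [ih, ← Set.image_comp, ← Function.iterate_succ' f M]

theorem densePart (X : Set (ℕ → Fin 2))
    (hXc : IsClosed X) (hXi : Set.MapsTo shiftMap X X)
    (hXmin : IsMinimalSet shiftMap X)
    (g : (Xtilde X) → (Xtilde X)) (hg : Continuous g)
    (hgs : ∀ x : Xtilde X, (g x : ℕ → Fin 3) = shiftMap (x : ℕ → Fin 3)) :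
    Dense (Periodics (barMap g hg)) := by
  classical
  rw [Metric.dense_iff]
  intro A r hr
  -- commutation of g iterates with the shift
  have hcomm : ∀ (M : ℕ) (x : Xtilde X), (g^[M] x : ℕ → Fin 3) = shiftMap^[M] (x : ℕ → Fin 3) := by
    intro M
    induction M with
    | zero => intro x; rfl
    | succ M ih =>
      intro x
      rw [Function.iterate_succ_apply', Function.iterate_succ_apply', hgs, ih]
  -- cover A by small balls
  have hAcomp : IsCompact (A : Set (Xtilde X)) := A.isCompact
  have hcov : (A : Set (Xtilde X)) ⊆ ⋃ a ∈ (A : Set (Xtilde X)), Metric.ball a (r/4) :=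
    fun a ha => Set.mem_biUnion ha (Metric.mem_ball_self (by linarith))
  obtain ⟨b', hb'sub, hb'fin, hb'cov⟩ := hAcomp.elim_finite_subcover_image
    (fun a _ => Metric.isOpen_ball) hcov
  -- apply keyA around each center
  have hKm : ∀ a : (Xtilde X), a ∈ b' → ∃ (K : Set (ℕ → Fin 3)) (mm : ℕ),
      K.Nonempty ∧ IsCompact K ∧ K ⊆ Metric.ball (a : ℕ → Fin 3) (r/4) ∩ Xtilde X ∧
      1 ≤ mm ∧ shiftMap^[mm] '' K = K := by
    intro a _
    obtain ⟨K, h1, h2, h3, mm, h4, h5⟩ := keyA X hXc hXi hXmin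
      (Metric.ball (a : ℕ → Fin 3) (r/4)) Metric.isOpen_ball
      ⟨a, Metric.mem_ball_self (by linarith), a.2⟩
    exact ⟨K, mm, h1, h2, h3, h4, h5⟩
  choose Kf mf hK1 hK2 hK3 hK4 hK5 using hKm
  set ft : Finset (Xtilde X) := hb'fin.toFinset with hft
  have hmem : ∀ a : {x // x ∈ ft}, a.1 ∈ b' := fun a => hb'fin.mem_toFinset.mp a.2
  set M : ℕ := ∏ a : {x // x ∈ ft}, mf a.1 (hmem a) with hM
  have hM1 : 1 ≤ M := Finset.one_le_prod' fun a _ => hK4 a.1 (hmem a)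
  have hdvd : ∀ a : {x // x ∈ ft}, mf a.1 (hmem a) ∣ M :=
    fun a => Finset.dvd_prod_of_mem _ (Finset.mem_univ a)
  set Bset : Set (ℕ → Fin 3) := ⋃ a : {x // x ∈ ft}, Kf a.1 (hmem a) with hBset
  have hBsetXt : Bset ⊆ Xtilde X := by
    rintro x hx
    obtain ⟨a, hxa⟩ := Set.mem_iUnion.1 hx
    exact (hK3 a.1 (hmem a) hxa).2
  have hBsetcomp : IsCompact Bset := isCompact_iUnion fun a => hK2 a.1 (hmem a)
  have hBsetinv : shiftMap^[M] '' Bset = Bset := by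
    rw [hBset, Set.image_iUnion]
    exact Set.iUnion_congr fun a => by
      obtain ⟨c, hc⟩ := hdvd a
      rw [hc]
      exact iter_image (hK5 a.1 (hmem a)) c
  set Bsub : Set (Xtilde X) := Subtype.val ⁻¹' Bset with hBsub
  have himgB : Subtype.val '' Bsub = Bset := by
    rw [hBsub, Subtype.image_preimage_coe]
    exact Set.inter_eq_self_of_subset_right hBsetXt
  have hBsubcomp : IsCompact Bsub := by
    rw [Topology.IsEmbedding.subtypeVal.isCompact_iff, himgB]
    exact hBsetcomp
  -- nonemptiness
  obtain ⟨a0, ha0A⟩ := A.nonempty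
  obtain ⟨aw, hawb', hawball⟩ := Set.mem_iUnion₂.1 (hb'cov ha0A)
  have hawft : aw ∈ ft := hb'fin.mem_toFinset.mpr hawb'
  have hBsubne : Bsub.Nonempty := by
    obtain ⟨y0, hy0⟩ := hK1 aw (hmem ⟨aw, hawft⟩)
    exact ⟨⟨y0, (hK3 aw (hmem ⟨aw, hawft⟩) hy0).2⟩,
      Set.mem_iUnion.2 ⟨⟨aw, hawft⟩, hy0⟩⟩
  set B : NonemptyCompacts (Xtilde X) := ⟨⟨Bsub, hBsubcomp⟩, hBsubne⟩ with hB
  refine ⟨B, ?_, M, hM1, ?_⟩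
  · -- distance bound
    rw [Metric.mem_ball, Metric.NonemptyCompacts.dist_eq]
    have hhd : Metric.hausdorffDist (B : Set (Xtilde X)) (A : Set (Xtilde X)) ≤ r/2 := by
      apply Metric.hausdorffDist_le_of_mem_dist (by linarith)
      · intro y hy
        obtain ⟨a, hya⟩ := Set.mem_iUnion.1 (show (y : ℕ → Fin 3) ∈ Bset from hy)
        refine ⟨a.1, hb'sub (hmem a), ?_⟩
        have := (hK3 a.1 (hmem a) hya).1
        rw [Subtype.dist_eq]
        rw [Metric.mem_ball] at this
        linarith
      · intro x hx
        obtain ⟨a, hab', haball⟩ := Set.mem_iUnion₂.1 (hb'cov hx)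
        have haft : a ∈ ft := hb'fin.mem_toFinset.mpr hab'
        obtain ⟨y0, hy0⟩ := hK1 a (hmem ⟨a, haft⟩)
        have hy0b : y0 ∈ Metric.ball (a : ℕ → Fin 3) (r/4) ∩ Xtilde X :=
          hK3 a (hmem ⟨a, haft⟩) hy0
        refine ⟨⟨y0, hy0b.2⟩, Set.mem_iUnion.2 ⟨⟨a, haft⟩, hy0⟩, ?_⟩
        have h1 : dist x a < r/4 := Metric.mem_ball.1 haball
        have h2 : dist (⟨y0, hy0b.2⟩ : Xtilde X) a < r/4 := by
          rw [Subtype.dist_eq]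
          have := Metric.mem_ball.1 hy0b.1
          rw [dist_comm] at this ⊢
          exact this
        calc dist x (⟨y0, hy0b.2⟩ : Xtilde X) ≤ dist x a + dist a (⟨y0, hy0b.2⟩ : Xtilde X) :=
              dist_triangle _ _ _
          _ ≤ r/4 + r/4 := by rw [dist_comm a]; exact add_le_add h1.le h2.le
          _ = r/2 := by ring
    linarith
  · -- periodicity
    show ((barMap g hg)^[M]) B = B
    apply NonemptyCompacts.ext
    rw [barMap_iter]
    apply Subtype.val_injective.image_injective
    rw [← Set.image_comp]
    have : (Subtype.val ∘ g^[M] : (Xtilde X) → ℕ → Fin 3) = shiftMap^[M] ∘ Subtype.val := by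
      funext x
      exact hcomm M x
    rw [this, Set.image_comp]
    show shiftMap^[M] '' (Subtype.val '' Bsub) = Subtype.val '' Bsub
    rw [himgB, hBsetinv]

end Aux

/-- Every nonempty relatively open subset of the extension contains a nonempty
compact set invariant under some iterate of the shift; consequently the induced
shift map on the hyperspace of the extension has a dense set of periodic points. -/
theorem Xtilde_hyper_densePeriodic (X : Set (ℕ → Fin 2))
    (hXc : IsClosed X) (hXi : Set.MapsTo shiftMap X X)
    (hXinf : X.Infinite) (hXmin : IsMinimalSet shiftMap X)
    (g : (Xtilde X) → (Xtilde X)) (hg : Continuous g)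
    (hgs : ∀ x : Xtilde X, (g x : ℕ → Fin 3) = shiftMap (x : ℕ → Fin 3)) :
    (∀ U : Set (ℕ → Fin 3), IsOpen U → (U ∩ Xtilde X).Nonempty →
      ∃ K : Set (ℕ → Fin 3), K.Nonempty ∧ IsCompact K ∧ K ⊆ U ∩ Xtilde X ∧
        ∃ m : ℕ, 1 ≤ m ∧ shiftMap^[m] '' K = K) ∧
    Dense (Periodics (barMap g hg)) :=
  ⟨fun U hU hne => keyA X hXc hXi hXmin U hU hne,
   densePart X hXc hXi hXmin g hg hgs⟩
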